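/- For every integer k, the congruence (4k+6)·t^k u dt ≡ -(k+3)·t^{k+1} u dt holds modulo dR; that is, in Ω_R/dR the class of (4k+6) t^k u dt equals the class of -(k+3) t^{k+1} u dt. Consequently the class of t^{-k} u dt in Ω_R/dR is zero for every k ≥ 3. -/

import Mathlib

noncomputable section

set_option synthInstance.maxHeartbeats 1000000
set_option maxHeartbeats 1000000

open Polynomial

/-- The polynomial `u² - (t² + 4t)` over the Laurent polynomial ring `ℂ[t,t⁻¹]`. -/
def threePoly : Polynomial (LaurentPolynomial ℂ) :=
  Polynomial.X ^ 2 - Polynomial.C (LaurentPolynomial.T 2 + 4 * LaurentPolynomial.T 1)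

/-- The three-point ring `R = ℂ[t, t⁻¹, u | u² = t² + 4t]`, i.e. the quotient of
`ℂ[t,t⁻¹][u]` by the ideal generated by `u² - t² - 4t`. -/
abbrev R3 : Type := AdjoinRoot threePoly

/-- `t^k` in `R3`, for `k : ℤ`. -/
def tp (k : ℤ) : R3 := AdjoinRoot.of threePoly (LaurentPolynomial.T k)

/-- the element `t` of `R`. -/
def tR : R3 := tp 1

/-- the element `t⁻¹` of `R`. -/
def tInv : R3 := tp (-1)

/-- the element `u` of `R`. -/
def uR : R3 := AdjoinRoot.root threePoly

abbrev ΩR : Type := KaehlerDifferential ℂ R3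

/-- the universal derivation `d : R → Ω_R`. -/
def DR : Derivation ℂ R3 ΩR := KaehlerDifferential.D ℂ R3

/-- the `ℂ`-subspace `dR ⊆ Ω_R` of exact differentials. -/
def dRsub : Submodule ℂ ΩR := LinearMap.range (DR.toLinearMap)

/-- the quotient `Ω_R/dR`. -/
abbrev ΩRq : Type := ΩR ⧸ dRsub

/-- the class of an element of `Ω_R` in `Ω_R/dR`. -/
def clsR (x : ΩR) : ΩRq := Submodule.Quotient.mk (p := dRsub) x

/-- `ω₀`, the class of `t⁻¹ dt`. -/
def ω0 : ΩRq := clsR (tInv • DR tR)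

/-- `ω₁`, the class of `t⁻¹u dt`. -/
def ω1 : ΩRq := clsR ((tInv * uR) • DR tR)

lemma tp_add' (a b : ℤ) : tp (a + b) = tp a * tp b := by
  unfold tp; rw [LaurentPolynomial.T_add, map_mul]

lemma tp_zero' : tp 0 = 1 := by
  unfold tp; rw [LaurentPolynomial.T_zero, map_one]

lemma tp_one_eq' : tp 1 = tR := rfl

lemma tinv_mul' : tp (-1) * tp 1 = 1 := by
  rw [← tp_add']; norm_num [tp_zero']

lemma hu2' : uR * uR = tp 2 + 4 * tp 1 := by
  have h := AdjoinRoot.eval₂_root threePoly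
  unfold uR tp
  unfold threePoly at h ⊢
  rw [eval₂_sub, eval₂_pow, eval₂_X, eval₂_C, sub_eq_zero] at h
  exact (sq _).symm.trans (h.trans (by simp only [map_add, map_mul, map_ofNat]; rfl))

/-- derivative of `t^m`. -/
lemma dtp' (m : ℤ) : DR (tp m) = ((m : R3) * tp (m - 1)) • DR tR := by
  induction m using Int.induction_on with
  | zero => simp [tp_zero']
  | succ n ih =>
    rw [tp_add' n 1, Derivation.leibniz, ih, tp_one_eq', smul_smul, ← add_smul]
    congr 1
    have h2 : tp ((n : ℤ) - 1) * tR = tp (n : ℤ) := by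
      rw [← tp_one_eq', ← tp_add']; norm_num
    rw [mul_comm tR, mul_assoc, h2]
    have h3 : ((n : ℤ) + 1 - 1) = (n : ℤ) := by ring
    rw [h3]
    push_cast
    ring
  | pred n ih =>
    have h : tp (-(n : ℤ)) = tp (-(n : ℤ) - 1) * tp 1 := by
      rw [← tp_add']; congr 1; ring
    have hthis := congrArg DR h
    rw [Derivation.leibniz, ih, tp_one_eq'] at hthis
    push_cast at hthis
    have h4 : tR • DR (tp (-(n : ℤ) - 1)) =
        (((-(n : ℤ) - 1 : ℤ) : R3) * tp (-(n : ℤ) - 1)) • DR tR := by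
      have h4' : tR • DR (tp (-(n : ℤ) - 1)) =
          ((-(n : ℕ) : R3) * tp (-(n : ℤ) - 1)) • DR tR - tp (-(n : ℤ) - 1) • DR tR := by
        rw [eq_sub_iff_add_eq, add_comm]
        exact hthis.symm
      rw [h4', ← sub_smul]
      congr 1
      push_cast
      ring
    have h5 := congrArg (fun x => tInv • x) h4
    simp only [smul_smul] at h5
    rw [show tInv * tR = 1 from tinv_mul', one_smul] at h5
    rw [h5]
    congr 1
    rw [mul_left_comm, show tInv = tp (-1) from rfl,
      show tp (-1) * tp (-(n : ℤ) - 1) = tp (-(n : ℤ) - 1 - 1) by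
        rw [← tp_add']; congr 1; ring]

lemma d_const' (c : ℂ) : DR (algebraMap ℂ R3 c) = 0 :=
  Derivation.map_algebraMap DR c

lemma d_four' : DR (4 : R3) = 0 := by
  rw [show (4 : R3) = algebraMap ℂ R3 4 from (map_ofNat (algebraMap ℂ R3) 4).symm]
  exact d_const' 4

lemma huDu' : uR • DR uR = (tp 1 + 2) • DR tR := by
  have h := congrArg DR hu2'
  rw [Derivation.leibniz, map_add, Derivation.leibniz, d_four', smul_zero, add_zero,
    dtp' 2, dtp' 1] at h
  norm_num [tp_zero'] at h
  have h2 : (2 : ℂ) • (uR • DR uR) = (2 : ℂ) • ((tp 1 + 2) • DR tR) := by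
    rw [two_smul, two_smul, h]
    rw [← add_smul, ← add_smul]
    congr 1
    ring
  exact smul_right_injective _ (two_ne_zero) h2

lemma key' (k : ℤ) :
    DR (tp (k + 2) * uR + 4 * (tp (k + 1) * uR)) =
      (((4 * k + 6 : ℤ) : R3) * tp k * uR) • DR tR +
        (((k + 3 : ℤ) : R3) * tp (k + 1) * uR) • DR tR := by
  rw [map_add, Derivation.leibniz, Derivation.leibniz, d_four', smul_zero, add_zero,
    Derivation.leibniz, dtp' (k + 2), dtp' (k + 1),
    show (k + 2 - 1 : ℤ) = k + 1 from by ring, show (k + 1 - 1 : ℤ) = k from by ring]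
  simp only [smul_smul, smul_add]
  have hDu : tp (k + 2) • DR uR + (4 * tp (k + 1)) • DR uR
      = (tp k * uR * (tp 1 + 2)) • DR tR := by
    rw [← add_smul,
      show tp (k + 2) + 4 * tp (k + 1) = tp k * uR * uR by
        rw [mul_assoc, hu2', tp_add' k 2, tp_add' k 1]; ring,
      mul_smul, huDu', smul_smul]
  have rearr : ∀ a b c d : ΩR, a + b + (c + d) = (a + c) + (b + d) := fun a b c d => by abel
  rw [rearr, hDu, ← add_smul, ← add_smul, ← add_smul]
  refine congrArg (· • DR tR) ?_
  rw [tp_add' k 1]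
  push_cast
  ring

/-- For every integer `k`, `(4k+6)·t^k u dt ≡ -(k+3)·t^{k+1} u dt` modulo `dR`; consequently the
class of `t^{-k} u dt` in `Ω_R/dR` is zero for every `k ≥ 3`. -/
theorem stmt_14 :
    (∀ k : ℤ, clsR ((((4 * k + 6 : ℤ) : R3) * tp k * uR) • DR tR) =
      clsR ((((-(k + 3) : ℤ) : R3) * tp (k + 1) * uR) • DR tR)) ∧
    (∀ k : ℤ, 3 ≤ k → clsR ((tp (-k) * uR) • DR tR) = 0) := by
  have part1 : ∀ k : ℤ, clsR ((((4 * k + 6 : ℤ) : R3) * tp k * uR) • DR tR) =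
      clsR ((((-(k + 3) : ℤ) : R3) * tp (k + 1) * uR) • DR tR) := by
    intro k
    unfold clsR
    rw [Submodule.Quotient.eq]
    have hmem : ∀ y : R3, DR y ∈ dRsub := fun y => LinearMap.mem_range.mpr ⟨y, rfl⟩
    have hdiff : (((4 * k + 6 : ℤ) : R3) * tp k * uR) • DR tR -
        (((-(k + 3) : ℤ) : R3) * tp (k + 1) * uR) • DR tR =
        DR (tp (k + 2) * uR + 4 * (tp (k + 1) * uR)) := by
      rw [key' k, show ((-(k + 3) : ℤ) : R3) = -(((k + 3) : ℤ) : R3) by push_cast; ring,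
        neg_mul, neg_mul, neg_smul, sub_neg_eq_add]
    rw [hdiff]
    exact hmem _
  refine ⟨part1, ?_⟩
  have hsc : ∀ (c : ℤ) (x : R3) (v : ΩR),
      clsR (((c : R3) * x) • v) = (c : ℂ) • clsR (x • v) := by
    intro c x v
    have h1 : ((c : R3) * x) • v = (c : ℂ) • (x • v) := by
      rw [mul_smul, show ((c : ℤ) : R3) = algebraMap ℂ R3 ((c : ℤ) : ℂ) from
        (map_intCast (algebraMap ℂ R3) c).symm, algebraMap_smul]
    rw [h1]
    exact Submodule.Quotient.mk_smul dRsub _ _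
  have rel : ∀ m : ℤ, ((4 * m + 6 : ℤ) : ℂ) • clsR ((tp m * uR) • DR tR) =
      ((-(m + 3) : ℤ) : ℂ) • clsR ((tp (m + 1) * uR) • DR tR) := by
    intro m
    have h := part1 m
    rw [mul_assoc, mul_assoc, hsc, hsc] at h
    exact h
  have base : clsR ((tp (-3) * uR) • DR tR) = 0 := by
    have h := rel (-3)
    norm_num at h
    exact h
  have step : ∀ n : ℤ, 3 ≤ n → clsR ((tp (-n) * uR) • DR tR) = 0 →
      clsR ((tp (-(n + 1)) * uR) • DR tR) = 0 := by
    intro n hn ih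
    have h := rel (-(n + 1))
    rw [show (-(n + 1) + 1 : ℤ) = -n from by ring, ih, smul_zero] at h
    have hc : ((4 * (-(n + 1)) + 6 : ℤ) : ℂ) ≠ 0 := by
      rw [Ne, Int.cast_eq_zero]; omega
    exact (smul_eq_zero.mp h).resolve_left hc
  exact fun k hk => Int.le_induction base step k hk
end
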